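/- Let A ∈ ℝ^{m×n} be a matrix whose rows a₁ᵀ, …, a_mᵀ all have Euclidean norm 1 and which has n linearly independent rows, let b ∈ ℝ^m, let P = {x ∈ ℝⁿ : Ax ≤ b}, let u₁, …, uₙ be n linearly independent rows of A, and let ε > 0. Let λ be drawn uniformly at random from (0,1]ⁿ and set w₁ = −Σ_{k=1}^n λ_k u_k. Then the probability that there exist two neighboring vertices z₁, z₂ of P with |w₁ᵀ(z₂ − z₁)| ≤ ε·‖z₂ − z₁‖ is at most 2mⁿε/δ(A). -/

import Mathlib

open scoped RealInnerProductSpace BigOperators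
open MeasureTheory ProbabilityTheory Matrix

noncomputable section

/-- Identity map from plain vectors to Euclidean space (L2 norm). -/
def toE {n : ℕ} (x : Fin n → ℝ) : EuclideanSpace ℝ (Fin n) := WithLp.toLp 2 x

/-- Identity map from Euclidean space to plain vectors. -/
def ofE {n : ℕ} (x : EuclideanSpace ℝ (Fin n)) : Fin n → ℝ := x

/-- Normalization N(x) = x / ‖x‖. -/
def nrm {n : ℕ} (x : EuclideanSpace ℝ (Fin n)) : EuclideanSpace ℝ (Fin n) := ‖x‖⁻¹ • x

/-- δ̂(S, v): the norm of the projection of v onto the orthogonal complement of span S,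
divided by ‖v‖ (the sine of the angle between v and span S). -/
def deltaHat {n : ℕ} (S : Set (EuclideanSpace ℝ (Fin n))) (v : EuclideanSpace ℝ (Fin n)) : ℝ :=
  ‖(((Submodule.span ℝ S)ᗮ).orthogonalProjection v : EuclideanSpace ℝ (Fin n))‖ / ‖v‖

/-- δ(z₁, …, zₙ) = min over k of δ̂({z_i : i ≠ k}, z_k). -/
def deltaVec {n : ℕ} (z : Fin n → EuclideanSpace ℝ (Fin n)) : ℝ :=
  ⨅ k : Fin n, deltaHat (z '' {i | i ≠ k}) (z k)

/-- δ(A) for rows a₁, …, a_m: the minimum of δ over all choices of n linearly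
independent rows. -/
def deltaRows {m n : ℕ} (a : Fin m → EuclideanSpace ℝ (Fin n)) : ℝ :=
  sInf { d | ∃ f : Fin n → Fin m, LinearIndependent ℝ (a ∘ f) ∧ d = deltaVec (a ∘ f) }

/-- A vertex of the polyhedron {x : ∀ i, ⟪a i, x⟫ ≤ b i}. -/
def IsVertex {m n : ℕ} (a : Fin m → EuclideanSpace ℝ (Fin n)) (b : Fin m → ℝ)
    (z : EuclideanSpace ℝ (Fin n)) : Prop :=
  (∀ i, ⟪a i, z⟫ ≤ b i) ∧ Submodule.span ℝ (a '' {i | ⟪a i, z⟫ = b i}) = ⊤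

/-- Two distinct vertices are neighboring if n−1 linearly independent constraints are
tight at both. -/
def Neighboring {m n : ℕ} (a : Fin m → EuclideanSpace ℝ (Fin n)) (b : Fin m → ℝ)
    (z₁ z₂ : EuclideanSpace ℝ (Fin n)) : Prop :=
  IsVertex a b z₁ ∧ IsVertex a b z₂ ∧ z₁ ≠ z₂ ∧
    ∃ s : Finset (Fin m), s.card = n - 1 ∧
      LinearIndependent ℝ (fun i : s => a i) ∧
      ∀ i ∈ s, ⟪a i, z₁⟫ = b i ∧ ⟪a i, z₂⟫ = b i

/-- The largest absolute value of a sub-determinant of size k. -/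
def subdetSup {m n : ℕ} (A : Matrix (Fin m) (Fin n) ℝ) (k : ℕ) : ℝ :=
  ⨆ (f : Fin k → Fin m) (_ : Function.Injective f) (g : Fin k → Fin n)
    (_ : Function.Injective g), |(A.submatrix f g).det|

end

/- ===== Auxiliary lemmas ===== -/

open scoped ENNReal

section Aux

open Finset in
instance : IsProbabilityMeasure (volume.restrict (Set.Ioc (0:ℝ) 1)) :=
  ⟨by simp⟩

lemma anticoncentration {n : ℕ} (c : Fin n → ℝ) (k0 : Fin n) (δ ε : ℝ) (hδ : 0 < δ)
    (hc : δ ≤ |c k0|) (hε : 0 ≤ ε) :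
    Measure.pi (fun _ : Fin n => volume.restrict (Set.Ioc (0:ℝ) 1))
      {l : Fin n → ℝ | |∑ k, l k * c k| ≤ ε} ≤ ENNReal.ofReal (2 * ε / δ) := by
  set μ : Fin n → Measure ℝ := fun _ => volume.restrict (Set.Ioc (0:ℝ) 1) with hμ
  set S : Set (Fin n → ℝ) := {l : Fin n → ℝ | |∑ k, l k * c k| ≤ ε} with hSdef
  have hc0 : c k0 ≠ 0 := by
    intro h; rw [h] at hc; simp at hc; linarith
  have hS : MeasurableSet S := by
    apply measurableSet_le (by fun_prop) measurable_const
  have hf : Measurable (S.indicator (1 : (Fin n → ℝ) → ℝ≥0∞)) :=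
    measurable_one.indicator hS
  have key : ∀ x : Fin n → ℝ,
      (∫⁻ t, S.indicator 1 (Function.update x k0 t) ∂ μ k0) ≤ ENNReal.ofReal (2 * ε / δ) := by
    intro x
    set r : ℝ := ∑ k ∈ Finset.univ \ {k0}, x k * c k with hr
    have hsum : ∀ t : ℝ, ∑ k, (Function.update x k0 t) k * c k = t * c k0 + r := by
      intro t
      have : (fun k => (Function.update x k0 t) k * c k)
          = Function.update (fun k => x k * c k) k0 (t * c k0) := by
        funext k
        by_cases h : k = k0
        · subst h; simp
        · simp [Function.update_of_ne h]
      rw [this, Finset.sum_update_of_mem (Finset.mem_univ k0)]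
    have hTset : {t : ℝ | Function.update x k0 t ∈ S} = {t : ℝ | |t * c k0 + r| ≤ ε} := by
      ext t; simp only [hSdef, Set.mem_setOf_eq, hsum]
    have hEq : (fun t : ℝ => S.indicator (1 : (Fin n → ℝ) → ℝ≥0∞) (Function.update x k0 t))
        = Set.indicator {t : ℝ | |t * c k0 + r| ≤ ε} 1 := by
      funext t
      rw [← hTset]
      simp only [Set.indicator_apply, Set.mem_setOf_eq]
      rfl
    rw [hEq]
    have hTmeas : MeasurableSet {t : ℝ | |t * c k0 + r| ≤ ε} :=
      measurableSet_le (by fun_prop) measurable_const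
    rw [lintegral_indicator_one hTmeas]
    have hint : {t : ℝ | |t * c k0 + r| ≤ ε} =
        if 0 < c k0 then Set.Icc ((-ε - r)/c k0) ((ε - r)/c k0)
        else Set.Icc ((ε - r)/c k0) ((-ε - r)/c k0) := by
      rcases lt_or_gt_of_ne hc0 with h | h
      · simp only [if_neg (not_lt.mpr h.le)]
        ext t
        simp only [Set.mem_setOf_eq, Set.mem_Icc, abs_le]
        rw [div_le_iff_of_neg h, le_div_iff_of_neg h]
        constructor <;> intro ⟨h1, h2⟩ <;> constructor <;> linarith
      · simp only [if_pos h]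
        ext t
        simp only [Set.mem_setOf_eq, Set.mem_Icc, abs_le]
        rw [div_le_iff₀ h, le_div_iff₀ h]
        constructor <;> intro ⟨h1, h2⟩ <;> constructor <;> linarith
    calc (μ k0) {t : ℝ | |t * c k0 + r| ≤ ε} ≤ volume {t : ℝ | |t * c k0 + r| ≤ ε} :=
          Measure.restrict_le_self _
      _ ≤ ENNReal.ofReal (2 * ε / δ) := by
          rw [hint]
          split_ifs with h
          · rw [Real.volume_Icc]
            apply ENNReal.ofReal_le_ofReal
            have habs : |c k0| = c k0 := abs_of_pos h
            rw [div_sub_div_same]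
            have : (ε - r - (-ε - r)) = 2 * ε := by ring
            rw [this]
            rw [habs] at hc
            exact div_le_div_of_nonneg_left (by linarith) hδ hc
          · have h' : c k0 < 0 := lt_of_le_of_ne (not_lt.mp h) hc0
            rw [Real.volume_Icc]
            apply ENNReal.ofReal_le_ofReal
            have habs : |c k0| = -c k0 := abs_of_neg h'
            rw [div_sub_div_same]
            have : (-ε - r - (ε - r)) / c k0 = 2 * ε / (-c k0) := by
              rw [div_eq_div_iff (ne_of_lt h') (by linarith)]; ring
            rw [this, ← habs]
            rw [habs] at hc ⊢
            exact div_le_div_of_nonneg_left (by linarith) hδ hc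
  calc Measure.pi μ S = ∫⁻ l, S.indicator 1 l ∂Measure.pi μ := (lintegral_indicator_one hS).symm
    _ = (∫⋯∫⁻_Finset.univ, S.indicator 1 ∂μ) (fun _ => 0) :=
        lintegral_eq_lmarginal_univ (fun _ => 0)
    _ = (∫⋯∫⁻_(Finset.univ.erase k0),
          (fun x => ∫⁻ t, S.indicator 1 (Function.update x k0 t) ∂μ k0) ∂μ) (fun _ => 0) :=
        congrFun (lmarginal_erase' (S.indicator 1) hf (Finset.mem_univ k0)) _
    _ ≤ (∫⋯∫⁻_(Finset.univ.erase k0),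
          (fun _ => ENNReal.ofReal (2 * ε / δ)) ∂μ) (fun _ => 0) :=
        lmarginal_mono (fun x => key x) _
    _ = ENNReal.ofReal (2 * ε / δ) := by
        simp [MeasureTheory.lmarginal]

lemma deltaHat_nonneg {n : ℕ} (S : Set (EuclideanSpace ℝ (Fin n)))
    (v : EuclideanSpace ℝ (Fin n)) : 0 ≤ deltaHat S v :=
  div_nonneg (norm_nonneg _) (norm_nonneg _)

lemma deltaVec_nonneg {n : ℕ} (z : Fin n → EuclideanSpace ℝ (Fin n)) : 0 ≤ deltaVec z :=
  Real.iInf_nonneg fun _ => deltaHat_nonneg _ _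

lemma deltaRows_bddBelow {m n : ℕ} (a : Fin m → EuclideanSpace ℝ (Fin n)) :
    BddBelow { d | ∃ f : Fin n → Fin m, LinearIndependent ℝ (a ∘ f) ∧ d = deltaVec (a ∘ f) } := by
  refine ⟨0, ?_⟩
  rintro d ⟨f, -, rfl⟩
  exact deltaVec_nonneg _

lemma deltaVec_pos {n : ℕ} (hn : n ≠ 0) {z : Fin n → EuclideanSpace ℝ (Fin n)}
    (hz : LinearIndependent ℝ z) : 0 < deltaVec z := by
  have hkey : ∀ k, 0 < deltaHat (z '' {i | i ≠ k}) (z k) := by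
    intro k
    have hns : z k ∉ Submodule.span ℝ (z '' {i | i ≠ k}) :=
      hz.notMem_span_image (by simp)
    have hproj : (((Submodule.span ℝ (z '' {i | i ≠ k}))ᗮ).orthogonalProjection (z k) :
        EuclideanSpace ℝ (Fin n)) ≠ 0 := by
      intro h0
      apply hns
      have := Submodule.orthogonalProjectionOnto_eq_zero_iff
        (K := (Submodule.span ℝ (z '' {i | i ≠ k}))ᗮ) (v := z k) |>.mp
        (by exact_mod_cast Subtype.ext h0)
      rwa [Submodule.orthogonal_orthogonal] at this
    exact div_pos (norm_pos_iff.mpr hproj) (norm_pos_iff.mpr (hz.ne_zero k))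
  have : Nonempty (Fin n) := ⟨⟨0, Nat.pos_of_ne_zero hn⟩⟩
  obtain ⟨k, hk⟩ := Finite.exists_min fun k => deltaHat (z '' {i | i ≠ k}) (z k)
  exact lt_of_lt_of_le (hkey k) (le_ciInf hk)

lemma deltaRows_pos {m n : ℕ} (hn : n ≠ 0) (a : Fin m → EuclideanSpace ℝ (Fin n))
    (u : Fin n → Fin m) (hu : LinearIndependent ℝ (a ∘ u)) : 0 < deltaRows a := by
  set D := { d | ∃ f : Fin n → Fin m, LinearIndependent ℝ (a ∘ f) ∧ d = deltaVec (a ∘ f) }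
  have hDne : D.Nonempty := ⟨deltaVec (a ∘ u), u, hu, rfl⟩
  have hDfin : D.Finite := by
    have : D ⊆ (fun f : Fin n → Fin m => deltaVec (a ∘ f)) '' Set.univ := by
      rintro d ⟨f, -, rfl⟩; exact ⟨f, trivial, rfl⟩
    exact Set.Finite.subset (Set.finite_univ.image _) this
  obtain ⟨f, hf, hval⟩ := hDne.csInf_mem hDfin
  rw [deltaRows, hval]
  exact deltaVec_pos hn hf

lemma key_geom {m n' : ℕ} (a : Fin m → EuclideanSpace ℝ (Fin (n' + 1)))
    (hnorm : ∀ i, ‖a i‖ = 1)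
    (u : Fin (n' + 1) → Fin m) (hu : LinearIndependent ℝ (a ∘ u))
    (s : Finset (Fin m)) (hcard : s.card = n')
    (hli : LinearIndependent ℝ (fun i : s => a i))
    (v : EuclideanSpace ℝ (Fin (n' + 1))) (hvnorm : ‖v‖ = 1)
    (hv : v ∈ (Submodule.span ℝ (a '' ↑s))ᗮ) :
    ∃ k0, deltaRows a ≤ |⟪a (u k0), v⟫| := by
  classical
  set W : Submodule ℝ (EuclideanSpace ℝ (Fin (n' + 1))) := Submodule.span ℝ (a '' ↑s) with hW
  have hv0 : v ≠ 0 := by intro h; rw [h, norm_zero] at hvnorm; norm_num at hvnorm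
  have hrange0 : Set.range (fun i : s => a i) = a '' ↑s := by
    rw [show (fun i : s => a i) = a ∘ (Subtype.val : s → Fin m) from rfl, Set.range_comp,
      Subtype.range_coe_subtype, Finset.setOf_mem]
  have hWrank : Module.finrank ℝ W = n' := by
    rw [hW, ← hrange0, finrank_span_eq_card hli, Fintype.card_coe, hcard]
  have hfrE : Module.finrank ℝ (EuclideanSpace ℝ (Fin (n' + 1))) = n' + 1 :=
    finrank_euclideanSpace_fin
  have hWorth : Module.finrank ℝ (Wᗮ : Submodule ℝ _) = 1 := by
    have := Submodule.finrank_add_finrank_orthogonal W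
    rw [hWrank, hfrE] at this
    omega
  have hWv : Wᗮ = Submodule.span ℝ {v} := by
    refine (Submodule.eq_of_le_of_finrank_eq ?_ ?_).symm
    · rwa [Submodule.span_singleton_le_iff_mem]
    · rw [finrank_span_singleton hv0, hWorth]
  -- find a row of u outside W
  have hk0 : ∃ k0, a (u k0) ∉ W := by
    by_contra hcon
    push_neg at hcon
    have htop : Submodule.span ℝ (Set.range (a ∘ u)) = ⊤ :=
      hu.span_eq_top_of_card_eq_finrank (by simp [hfrE])
    have hle : Submodule.span ℝ (Set.range (a ∘ u)) ≤ W := by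
      rw [Submodule.span_le]
      rintro x ⟨k, rfl⟩
      exact hcon k
    rw [htop] at hle
    have hWT : W = ⊤ := top_le_iff.mp hle
    rw [hWT, finrank_top, hfrE] at hWrank
    omega
  obtain ⟨k0, hk0⟩ := hk0
  -- build the family of n'+1 rows
  let e : Fin n' ≃ s := (s.equivFin.trans (finCongr hcard)).symm
  let g : Fin n' → Fin m := fun i => ↑(e i)
  have hagli : LinearIndependent ℝ (a ∘ g) := hli.comp e e.injective
  have hrg : Set.range g = ↑s := by
    ext x
    simp only [Set.mem_range, Finset.mem_coe]
    constructor
    · rintro ⟨i, rfl⟩; exact (e i).2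
    · intro hx; exact ⟨e.symm ⟨x, hx⟩, by simp [g]⟩
  have hrange : Set.range (a ∘ g) = a '' ↑s := by
    rw [Set.range_comp, hrg]
  let f : Fin (n' + 1) → Fin m := Fin.snoc g (u k0)
  have haf : a ∘ f = Fin.snoc (a ∘ g) (a (u k0)) := (Fin.comp_snoc a g (u k0))
  have hfli : LinearIndependent ℝ (a ∘ f) := by
    rw [haf, linearIndependent_fin_snoc]
    exact ⟨hagli, by rw [hrange]; exact hk0⟩
  have himg : (a ∘ f) '' {i | i ≠ Fin.last n'} = a '' ↑s := by
    rw [← hrange]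
    ext y
    constructor
    · rintro ⟨i, hi, rfl⟩
      obtain ⟨j, rfl⟩ := Fin.eq_castSucc_of_ne_last hi
      exact ⟨j, by simp only [Function.comp_apply, f, Fin.snoc_castSucc]⟩
    · rintro ⟨j, rfl⟩
      exact ⟨Fin.castSucc j, (Fin.castSucc_lt_last j).ne,
        by simp only [Function.comp_apply, f, Fin.snoc_castSucc]⟩
  have hlast : (a ∘ f) (Fin.last n') = a (u k0) := by
    rw [haf]; exact Fin.snoc_last _ _
  have h1 : deltaRows a ≤ deltaVec (a ∘ f) :=
    csInf_le (deltaRows_bddBelow a) ⟨f, hfli, rfl⟩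
  have h2 : deltaVec (a ∘ f) ≤
      deltaHat ((a ∘ f) '' {i | i ≠ Fin.last n'}) ((a ∘ f) (Fin.last n')) := by
    apply ciInf_le
    refine ⟨0, ?_⟩
    rintro d ⟨k, rfl⟩
    exact deltaHat_nonneg _ _
  rw [himg, hlast] at h2
  have hWv' : (Submodule.span ℝ (a '' ↑s))ᗮ = Submodule.span ℝ {v} := hWv
  have h3 : deltaHat (a '' ↑s) (a (u k0)) = |⟪a (u k0), v⟫| := by
    rw [deltaHat, hnorm, div_one]
    have hK : ∀ (K : Submodule ℝ (EuclideanSpace ℝ (Fin (n' + 1)))) [K.HasOrthogonalProjection],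
        K = Submodule.span ℝ {v} → ‖(K.orthogonalProjection (a (u k0)) : EuclideanSpace ℝ (Fin (n' + 1)))‖
          = ‖(Submodule.span ℝ {v}).starProjection (a (u k0))‖ := by
      intro K _ h; subst h; rfl
    rw [hK _ hWv']
    rw [Submodule.starProjection_unit_singleton ℝ hvnorm]
    rw [real_inner_comm]
    simp [norm_smul, Real.norm_eq_abs, hvnorm]
  exact ⟨k0, by rw [← h3]; exact le_trans h1 h2⟩

lemma exists_unit_normal {m n' : ℕ} (a : Fin m → EuclideanSpace ℝ (Fin (n' + 1)))
    (s : Finset (Fin m)) (hcard : s.card = n')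
    (hli : LinearIndependent ℝ (fun i : s => a i)) :
    ∃ v : EuclideanSpace ℝ (Fin (n' + 1)), ‖v‖ = 1 ∧
      (Submodule.span ℝ (a '' ↑s))ᗮ = Submodule.span ℝ {v} := by
  classical
  set W : Submodule ℝ (EuclideanSpace ℝ (Fin (n' + 1))) := Submodule.span ℝ (a '' ↑s) with hW
  have hrange0 : Set.range (fun i : s => a i) = a '' ↑s := by
    rw [show (fun i : s => a i) = a ∘ (Subtype.val : s → Fin m) from rfl, Set.range_comp,
      Subtype.range_coe_subtype, Finset.setOf_mem]
  have hWrank : Module.finrank ℝ W = n' := by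
    rw [hW, ← hrange0, finrank_span_eq_card hli, Fintype.card_coe, hcard]
  have hfrE : Module.finrank ℝ (EuclideanSpace ℝ (Fin (n' + 1))) = n' + 1 :=
    finrank_euclideanSpace_fin
  have hWorth : Module.finrank ℝ (Wᗮ : Submodule ℝ _) = 1 := by
    have := Submodule.finrank_add_finrank_orthogonal W
    rw [hWrank, hfrE] at this
    omega
  have : Nontrivial (Wᗮ : Submodule ℝ _) :=
    Module.nontrivial_of_finrank_pos (R := ℝ) (by rw [hWorth]; norm_num)
  obtain ⟨x, hx0⟩ := exists_ne (0 : (Wᗮ : Submodule ℝ _))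
  have hx0' : (x : EuclideanSpace ℝ (Fin (n' + 1))) ≠ 0 := fun h => hx0 (Subtype.ext h)
  set v : EuclideanSpace ℝ (Fin (n' + 1)) :=
    (‖(x : EuclideanSpace ℝ (Fin (n' + 1)))‖⁻¹ : ℝ) • (x : EuclideanSpace ℝ (Fin (n' + 1)))
    with hv
  have hvnorm : ‖v‖ = 1 := norm_smul_inv_norm (𝕜 := ℝ) hx0'
  have hv0 : v ≠ 0 := by intro h; rw [h, norm_zero] at hvnorm; norm_num at hvnorm
  have hmem : v ∈ Wᗮ := Submodule.smul_mem _ _ x.2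
  refine ⟨v, hvnorm, ?_⟩
  refine (Submodule.eq_of_le_of_finrank_eq
    ((Submodule.span_singleton_le_iff_mem _ _).mpr hmem) ?_).symm
  rw [finrank_span_singleton hv0, hWorth]

end Aux

/-- Let A have unit-norm rows a₁, …, a_m and let u₁, …, uₙ be n linearly
independent rows of A. If λ is uniform on (0,1]ⁿ and w₁ = −Σ λₖuₖ, then the probability
that there exist two neighboring vertices z₁, z₂ of P = {x : Ax ≤ b} with
|w₁ᵀ(z₂ − z₁)| ≤ ε·‖z₂ − z₁‖ is at most 2mⁿε/δ(A). -/
theorem stmt13 {m n : ℕ} (a : Fin m → EuclideanSpace ℝ (Fin n)) (b : Fin m → ℝ)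
    (hnorm : ∀ i, ‖a i‖ = 1)
    (u : Fin n → Fin m) (hu : LinearIndependent ℝ (a ∘ u))
    (ε : ℝ) (hε : 0 < ε) :
    Measure.pi (fun _ : Fin n => volume.restrict (Set.Ioc (0:ℝ) 1))
        {l : Fin n → ℝ | ∃ z₁ z₂, Neighboring a b z₁ z₂ ∧
          |⟪-∑ k, l k • a (u k), z₂ - z₁⟫| ≤ ε * ‖z₂ - z₁‖} ≤
      ENNReal.ofReal (2 * (m : ℝ) ^ n * ε / deltaRows a) := by
  classical
  rcases Nat.eq_zero_or_pos n with hn | hn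
  · subst hn
    haveI : Subsingleton (EuclideanSpace ℝ (Fin 0)) := ⟨fun x y => PiLp.ext fun i => i.elim0⟩
    refine le_trans (le_of_eq (measure_mono_null ?_ measure_empty)) zero_le
    rintro l ⟨z₁, z₂, hN, -⟩
    exact absurd (Subsingleton.elim z₁ z₂) hN.2.2.1
  obtain ⟨n', rfl⟩ : ∃ n', n = n' + 1 := ⟨n - 1, (Nat.succ_pred_eq_of_pos hn).symm⟩
  have hδ : 0 < deltaRows a := deltaRows_pos (Nat.succ_ne_zero n') a u hu
  set δ := deltaRows a with hδdef
  have hvex := fun (s : Finset (Fin m))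
      (h : s.card = n' ∧ LinearIndependent ℝ (fun i : s => a i)) =>
    exists_unit_normal a s h.1 h.2
  set V : Finset (Fin m) → EuclideanSpace ℝ (Fin (n' + 1)) := fun s =>
    if h : s.card = n' ∧ LinearIndependent ℝ (fun i : s => a i) then (hvex s h).choose else 0
    with hVdef
  have hVspec : ∀ (s : Finset (Fin m)) (h : s.card = n' ∧ LinearIndependent ℝ (fun i : s => a i)),
      ‖V s‖ = 1 ∧ (Submodule.span ℝ (a '' ↑s))ᗮ = Submodule.span ℝ {V s} := by
    intro s h
    simp only [hVdef, dif_pos h]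
    exact (hvex s h).choose_spec
  set T : Finset (Finset (Fin m)) := Finset.univ.filter
    (fun s => s.card = n' ∧ LinearIndependent ℝ (fun i : s => a i)) with hT
  set Ev : Finset (Fin m) → Set (Fin (n' + 1) → ℝ) := fun s =>
    {l | |∑ k, l k * ⟪a (u k), V s⟫| ≤ ε} with hEv
  have hsub : {l : Fin (n' + 1) → ℝ | ∃ z₁ z₂, Neighboring a b z₁ z₂ ∧
      |⟪-∑ k, l k • a (u k), z₂ - z₁⟫| ≤ ε * ‖z₂ - z₁‖} ⊆ ⋃ s ∈ T, Ev s := by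
    rintro l ⟨z₁, z₂, ⟨hvz1, hvz2, hne, s, hcard, hli, htight⟩, hip⟩
    have hVs := hVspec s ⟨hcard, hli⟩
    have hd0 : z₂ - z₁ ≠ 0 := sub_ne_zero.mpr (Ne.symm hne)
    have hdW : z₂ - z₁ ∈ (Submodule.span ℝ (a '' ↑s))ᗮ := by
      rw [Submodule.mem_orthogonal]
      intro w hw
      induction hw using Submodule.span_induction with
      | mem x hx =>
        obtain ⟨i, hi, rfl⟩ := hx
        rw [inner_sub_right, (htight i hi).1, (htight i hi).2, sub_self]
      | zero => exact inner_zero_left _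
      | add x y hx hy ihx ihy => rw [inner_add_left, ihx, ihy, add_zero]
      | smul t x hx ihx => rw [real_inner_smul_left, ihx, mul_zero]
    rw [hVs.2] at hdW
    obtain ⟨t, ht⟩ := Submodule.mem_span_singleton.mp hdW
    have ht0 : t ≠ 0 := by rintro rfl; rw [zero_smul] at ht; exact hd0 ht.symm
    have hsT : s ∈ T := by
      rw [hT, Finset.mem_filter]; exact ⟨Finset.mem_univ _, hcard, hli⟩
    refine Set.mem_biUnion hsT ?_
    · have hnd : ‖z₂ - z₁‖ = |t| := by
        rw [← ht, norm_smul, hVs.1, mul_one, Real.norm_eq_abs]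
      have hcalc : ⟪-∑ k, l k • a (u k), z₂ - z₁⟫
          = -(t * ∑ k, l k * ⟪a (u k), V s⟫) := by
        rw [inner_neg_left, ← ht, Finset.mul_sum]
        rw [sum_inner]
        congr 1
        refine Finset.sum_congr rfl fun k _ => ?_
        rw [real_inner_smul_left, real_inner_smul_right]
        ring
      rw [hcalc, abs_neg, abs_mul, hnd] at hip
      simp only [hEv, Set.mem_setOf_eq]
      have habs : 0 < |t| := abs_pos.mpr ht0
      refine le_of_mul_le_mul_left ?_ habs
      calc |t| * |∑ k, l k * ⟪a (u k), V s⟫| ≤ ε * |t| := hip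
        _ = |t| * ε := mul_comm _ _
  refine le_trans (measure_mono hsub) ?_
  have hm1 : 1 ≤ m := Fin.pos (u 0)
  have hcount : T.card ≤ m ^ (n' + 1) := by
    have h1 : T ⊆ Finset.univ.powersetCard n' := by
      intro s hs
      rw [hT, Finset.mem_filter] at hs
      exact Finset.mem_powersetCard.mpr ⟨Finset.subset_univ _, hs.2.1⟩
    calc T.card ≤ (Finset.univ.powersetCard n' : Finset (Finset (Fin m))).card :=
          Finset.card_le_card h1
      _ = (Fintype.card (Fin m)).choose n' := by
          rw [Finset.card_powersetCard, Finset.card_univ]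
      _ = m.choose n' := by rw [Fintype.card_fin]
      _ ≤ m ^ n' := Nat.choose_le_pow _ _
      _ ≤ m ^ (n' + 1) := Nat.pow_le_pow_right hm1 (Nat.le_succ _)
  calc Measure.pi (fun _ : Fin (n' + 1) => volume.restrict (Set.Ioc (0:ℝ) 1)) (⋃ s ∈ T, Ev s)
      ≤ ∑ s ∈ T, Measure.pi (fun _ : Fin (n' + 1) => volume.restrict (Set.Ioc (0:ℝ) 1)) (Ev s) :=
        measure_biUnion_finset_le _ _
    _ ≤ ∑ _s ∈ T, ENNReal.ofReal (2 * ε / δ) := by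
        refine Finset.sum_le_sum ?_
        intro s hs
        rw [hT, Finset.mem_filter] at hs
        obtain ⟨-, hcard, hli⟩ := hs
        have hVs := hVspec s ⟨hcard, hli⟩
        have hVmem : V s ∈ (Submodule.span ℝ (a '' ↑s))ᗮ := by
          rw [hVs.2]; exact Submodule.mem_span_singleton_self _
        obtain ⟨k0, hk0⟩ := key_geom a hnorm u hu s hcard hli (V s) hVs.1 hVmem
        exact anticoncentration (fun k => ⟪a (u k), V s⟫) k0 δ ε hδ hk0 hε.le
    _ = T.card • ENNReal.ofReal (2 * ε / δ) := Finset.sum_const _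
    _ ≤ (m ^ (n' + 1)) • ENNReal.ofReal (2 * ε / δ) := by
        simp only [nsmul_eq_mul]
        exact mul_le_mul_left (by exact_mod_cast hcount) _
    _ ≤ ENNReal.ofReal (2 * (m : ℝ) ^ (n' + 1) * ε / δ) := by
        rw [nsmul_eq_mul]
        have hcast : ((m ^ (n' + 1) : ℕ) : ℝ≥0∞) = ENNReal.ofReal ((m : ℝ) ^ (n' + 1)) := by
          rw [← ENNReal.ofReal_natCast]; push_cast; ring_nf
        rw [hcast, ← ENNReal.ofReal_mul (by positivity)]
        apply ENNReal.ofReal_le_ofReal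
        rw [show (m : ℝ) ^ (n' + 1) * (2 * ε / δ) = 2 * (m : ℝ) ^ (n' + 1) * ε / δ by ring]
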